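/- Define recursively: a tempered distribution f on ℝ is a de6-QAHD of degree λ ∈ ℂ and order k ∈ ℕ if either k = 0 and f is homogeneous of degree λ, or k ≥ 1 and there exist tempered distributions f₀, …, f_{k−1}, where f_j is a de6-QAHD of degree λ and order j, and differentiable functions H₁, …, H_k : (0,∞) → ℂ such that ⟨f, φ(·/a)⟩ = a^{λ+1}⟨f, φ⟩ + Σ_{r=1}^{k} H_r(a)⟨f_{k−r}, φ⟩ for every a > 0 and every Schwartz φ. Theorem: every de6-QAHD of degree λ and order k is a quasi associated homogeneous distribution (QAHD) of degree λ and order k, i.e. the class defined with arbitrary differentiable coefficient functions H_r coincides with the class defined with the specific coefficients a^{λ+1}(log a)^r. -/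

import Mathlib

open MeasureTheory SchwartzMap Complex Finset

noncomputable section

variable {E : Type*} [NormedAddCommGroup E] [NormedSpace ℝ E]

/-- The dilation operator on Schwartz functions: for `a ≠ 0`,
`dilate a φ = fun x => φ (a⁻¹ • x)`, i.e. `x ↦ φ (x / a)` (junk value `0` for `a = 0`). -/
def dilate (a : ℝ) : 𝓢(E, ℂ) →L[ℝ] 𝓢(E, ℂ) :=
  if h : a = 0 then 0 else
    SchwartzMap.compCLM ℝ (g := fun x : E => a⁻¹ • x)
      (by exact (a⁻¹ • ContinuousLinearMap.id ℝ E).hasTemperateGrowth)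
      ⟨1, |a|, fun x => by
        have ha : a ≠ 0 := h
        have h0 : |a| ≠ 0 := abs_ne_zero.mpr ha
        have hx : ‖a⁻¹ • x‖ = |a|⁻¹ * ‖x‖ := by
          rw [norm_smul, norm_inv, Real.norm_eq_abs]
        have key : |a| * (1 + ‖a⁻¹ • x‖) ^ 1 = |a| + ‖x‖ := by
          rw [pow_one, hx, mul_add, mul_one, ← mul_assoc, mul_inv_cancel₀ h0, one_mul]
        calc ‖x‖ ≤ |a| + ‖x‖ := le_add_of_nonneg_left (abs_nonneg a)
          _ = |a| * (1 + ‖a⁻¹ • x‖) ^ 1 := key.symm⟩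

lemma dilate_apply (a : ℝ) (ha : a ≠ 0) (φ : 𝓢(E, ℂ)) (x : E) :
    dilate a φ x = φ (a⁻¹ • x) := by
  simp [dilate, dif_neg ha]
  rfl

/-- On `ℝ`, `dilate a φ` is the function `x ↦ φ (x / a)`. -/
lemma dilate_apply_real (a : ℝ) (ha : a ≠ 0) (φ : 𝓢(ℝ, ℂ)) (x : ℝ) :
    dilate a φ x = φ (x / a) := by
  rw [dilate_apply a ha, smul_eq_mul, inv_mul_eq_div]

/-- A tempered distribution on `ℝ` is homogeneous of degree `λ` if
`⟨f, φ(·/a)⟩ = a^(λ+1) ⟨f, φ⟩` for all `a > 0` and all Schwartz `φ`. -/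
def IsHomogeneous (lam : ℂ) (f : 𝓢(ℝ, ℂ) →L[ℂ] ℂ) : Prop :=
  ∀ a : ℝ, 0 < a → ∀ φ : 𝓢(ℝ, ℂ), f (dilate a φ) = (a : ℂ) ^ (lam + 1) * f φ

/-- Quasi associated homogeneous distribution of degree `λ` and order `k` on `ℝ`:
for `k = 0` a homogeneous distribution of degree `λ`; for `k ≥ 1`, there are QAHDs
`g j` of degree `λ` and order `j` for `j < k` such that
`⟨f, φ(·/a)⟩ = a^(λ+1) ⟨f, φ⟩ + ∑_{r=1}^{k} a^(λ+1) (log a)^r ⟨g (k-r), φ⟩`. -/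
inductive IsQAHD (lam : ℂ) : ℕ → (𝓢(ℝ, ℂ) →L[ℂ] ℂ) → Prop
  | base {f : 𝓢(ℝ, ℂ) →L[ℂ] ℂ} (hf : IsHomogeneous lam f) : IsQAHD lam 0 f
  | step {k : ℕ} (hk : 0 < k) {f : 𝓢(ℝ, ℂ) →L[ℂ] ℂ} (g : ℕ → (𝓢(ℝ, ℂ) →L[ℂ] ℂ))
      (hg : ∀ j, j < k → IsQAHD lam j (g j))
      (hf : ∀ a : ℝ, 0 < a → ∀ φ : 𝓢(ℝ, ℂ),
        f (dilate a φ) = (a : ℂ) ^ (lam + 1) * f φ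
          + ∑ r ∈ Finset.Icc 1 k,
              (a : ℂ) ^ (lam + 1) * (Real.log a : ℂ) ^ r * (g (k - r)) φ) :
      IsQAHD lam k f

/-- A de6-QAHD of degree `λ` and order `k`: for `k = 0` a homogeneous distribution; for
`k ≥ 1`, there are de6-QAHDs `g j` of order `j` for `j < k` and differentiable functions
`H r : (0,∞) → ℂ` (`1 ≤ r ≤ k`) with
`⟨f, φ(·/a)⟩ = a^(λ+1)⟨f, φ⟩ + ∑_{r=1}^{k} H_r(a) ⟨g (k-r), φ⟩`. -/
inductive IsDe6QAHD (lam : ℂ) : ℕ → (𝓢(ℝ, ℂ) →L[ℂ] ℂ) → Prop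
  | base {f : 𝓢(ℝ, ℂ) →L[ℂ] ℂ} (hf : IsHomogeneous lam f) : IsDe6QAHD lam 0 f
  | step {k : ℕ} (hk : 0 < k) {f : 𝓢(ℝ, ℂ) →L[ℂ] ℂ} (g : ℕ → (𝓢(ℝ, ℂ) →L[ℂ] ℂ))
      (H : ℕ → ℝ → ℂ)
      (hg : ∀ j, j < k → IsDe6QAHD lam j (g j))
      (hH : ∀ r, 1 ≤ r → r ≤ k → ∀ a : ℝ, 0 < a → DifferentiableAt ℝ (H r) a)
      (hf : ∀ a : ℝ, 0 < a → ∀ φ : 𝓢(ℝ, ℂ),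
        f (dilate a φ) = (a : ℂ) ^ (lam + 1) * f φ
          + ∑ r ∈ Finset.Icc 1 k, H r a * (g (k - r)) φ) :
      IsDe6QAHD lam k f

lemma tri {M : Type*} [AddCommMonoid M] (n : ℕ) (F : ℕ → ℕ → M) :
    ∑ m ∈ range n, ∑ s ∈ range (m+1), F s (m-s) = ∑ s ∈ range n, ∑ j ∈ range (n-s), F s j := by
  induction n with
  | zero => simp
  | succ n ih =>
    rw [Finset.sum_range_succ, ih]
    conv_rhs => rw [Finset.sum_range_succ]
    have h1 : ∑ s ∈ range n, ∑ j ∈ range (n+1-s), F s j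
        = ∑ s ∈ range n, (∑ j ∈ range (n-s), F s j + F s (n-s)) := by
      apply Finset.sum_congr rfl
      intro s hs
      rw [Finset.mem_range] at hs
      rw [show n+1-s = (n-s)+1 by omega, Finset.sum_range_succ]
    rw [h1, Finset.sum_add_distrib, Finset.sum_range_succ]
    simp [add_assoc]

lemma sum_Icc_one_eq_sum_range {M : Type*} [AddCommMonoid M] (n : ℕ) (F : ℕ → M) :
    ∑ m ∈ Icc 1 n, F m = ∑ s ∈ range n, F (s+1) := by
  induction n with
  | zero => simp
  | succ n ih =>
    rw [Finset.sum_Icc_succ_top (by omega), ih, Finset.sum_range_succ]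

lemma range_succ_split {M : Type*} [AddCommMonoid M] (k : ℕ) (F : ℕ → M) :
    ∑ m ∈ range (k+1), F m = F 0 + ∑ m ∈ Icc 1 k, F m := by
  rw [sum_Icc_one_eq_sum_range, Finset.sum_range_succ']
  exact add_comm _ _

lemma swap_Icc {M : Type*} [AddCommMonoid M] (k : ℕ) (F : ℕ → ℕ → M) :
    ∑ r ∈ Icc 1 k, ∑ m ∈ Icc 1 (k+1-r), F r m
      = ∑ m ∈ Icc 1 k, ∑ r ∈ Icc 1 (k+1-m), F r m := by
  have key : ∀ G : ℕ → ℕ → M,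
      ∑ r ∈ range k, ∑ m ∈ range (k-r), G r m = ∑ m ∈ range k, ∑ r ∈ range (k-m), G r m := by
    intro G
    rw [← tri k (fun s j => G s j), ← tri k (fun s j => G j s)]
    apply Finset.sum_congr rfl
    intro m hm
    rw [← Finset.sum_range_reflect]
    apply Finset.sum_congr rfl
    intro s hs
    rw [Finset.mem_range] at hs
    congr 1 <;> omega
  have l1 : ∀ G : ℕ → ℕ → M, ∑ r ∈ Icc 1 k, ∑ m ∈ Icc 1 (k+1-r), G r m
      = ∑ r ∈ range k, ∑ m ∈ range (k-r), G (r+1) (m+1) := by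
    intro G
    rw [sum_Icc_one_eq_sum_range]
    apply Finset.sum_congr rfl
    intro r _
    rw [show k+1-(r+1) = k-r by omega, sum_Icc_one_eq_sum_range]
  rw [l1, l1, key]

lemma poly_indep (n : ℕ) (z : ℕ → ℂ) (h : ∀ t : ℝ, ∑ s ∈ range n, z s * (t:ℂ)^s = 0) :
    ∀ s < n, z s = 0 := by
  intro s hs
  set p : Polynomial ℂ := ∑ i ∈ range n, Polynomial.C (z i) * Polynomial.X ^ i with hp
  have hroot : ∀ t : ℝ, p.IsRoot (t:ℂ) := by
    intro t
    simp only [Polynomial.IsRoot, hp, Polynomial.eval_finset_sum, Polynomial.eval_mul,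
      Polynomial.eval_C, Polynomial.eval_pow, Polynomial.eval_X]
    exact h t
  have hp0 : p = 0 := by
    apply Polynomial.eq_zero_of_infinite_isRoot
    apply Set.Infinite.mono (s := Set.range (Complex.ofReal))
    · rintro x ⟨t, rfl⟩; exact hroot t
    · exact Set.infinite_range_of_injective Complex.ofReal_injective
  have : p.coeff s = z s := by
    rw [hp, Polynomial.finset_sum_coeff]
    rw [Finset.sum_eq_single s]
    · simp
    · intro b _ hb
      simp [Polynomial.coeff_C_mul, Polynomial.coeff_X_pow, (Ne.symm hb)]
    · intro hs'; exact absurd (Finset.mem_range.mpr hs) hs'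
  rw [← this, hp0]; simp

lemma dilate_one (φ : 𝓢(ℝ, ℂ)) : dilate (1:ℝ) φ = φ := by
  ext x
  rw [dilate_apply_real 1 one_ne_zero, div_one]

lemma dilate_comp (a b : ℝ) (ha : a ≠ 0) (hb : b ≠ 0) (φ : 𝓢(ℝ, ℂ)) :
    dilate a (dilate b φ) = dilate (a*b) φ := by
  ext x
  rw [dilate_apply_real a ha, dilate_apply_real b hb, dilate_apply_real _ (mul_ne_zero ha hb),
    div_div]

lemma expCpow (u : ℝ) (w : ℂ) : ((Real.exp u : ℝ) : ℂ) ^ w = Complex.exp (w * u) := by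
  rw [Complex.ofReal_exp, Complex.cpow_def_of_ne_zero (Complex.exp_ne_zero _),
    Complex.log_exp (by simp [Real.pi_pos]) (by simp [Real.pi_pos.le]), mul_comm]

lemma cpow_pos_eq {a : ℝ} (ha : 0 < a) (w : ℂ) :
    (a : ℂ) ^ w = Complex.exp (w * Real.log a) := by
  rw [← expCpow, Real.exp_log ha]

lemma qahd_expand {lam : ℂ} {k : ℕ} {g : 𝓢(ℝ, ℂ) →L[ℂ] ℂ} (h : IsQAHD lam k g) :
    ∃ d : ℕ → (𝓢(ℝ, ℂ) →L[ℂ] ℂ), d 0 = g ∧ ∀ b : ℝ, 0 < b → ∀ φ : 𝓢(ℝ, ℂ),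
      g (dilate b φ) = ∑ s ∈ range (k+1), (b:ℂ)^(lam+1) * (Real.log b : ℂ)^s * d s φ := by
  cases h with
  | base hg =>
    refine ⟨fun s => if s = 0 then g else 0, by simp, ?_⟩
    intro b hb φ
    simp [hg b hb φ]
  | step hk gw hgw hid =>
    refine ⟨fun s => if s = 0 then g else gw (k - s), by simp, ?_⟩
    intro b hb φ
    rw [range_succ_split k (fun s => (b:ℂ)^(lam+1) * (Real.log b : ℂ)^s *
      (if s = 0 then g else gw (k - s)) φ)]
    simp only [if_pos rfl, pow_zero, mul_one]
    rw [hid b hb φ]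
    congr 1
    apply Finset.sum_congr rfl
    intro r hr
    rw [Finset.mem_Icc] at hr
    rw [if_neg (by omega)]

lemma lemA (lam : ℂ) : ∀ k : ℕ, ∀ f : 𝓢(ℝ, ℂ) →L[ℂ] ℂ, ∀ c : ℕ → (𝓢(ℝ, ℂ) →L[ℂ] ℂ),
    c 0 = f →
    (∀ a : ℝ, 0 < a → ∀ φ : 𝓢(ℝ, ℂ),
      f (dilate a φ) = ∑ m ∈ range (k+1), (a:ℂ)^(lam+1) * (Real.log a : ℂ)^m * c m φ) →
    IsQAHD lam k f := by
  intro k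
  induction k using Nat.strong_induction_on with
  | _ k ih =>
  intro f c hc0 hid
  rcases Nat.eq_zero_or_pos k with hk0 | hk
  · subst hk0
    apply IsQAHD.base
    intro a ha φ
    rw [hid a ha φ]
    simp [hc0]
  · -- derived identity for the coefficient functionals
    have hder : ∀ s : ℕ, s ≤ k → ∀ b : ℝ, 0 < b → ∀ φ : 𝓢(ℝ, ℂ),
        c s (dilate b φ) = ∑ j ∈ range (k+1-s),
          (b:ℂ)^(lam+1) * (Real.log b : ℂ)^j * ((Nat.choose (s+j) s : ℂ) * c (s+j) φ) := by
      intro s hsk b hb φ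
      set z : ℕ → ℂ := fun s => c s (dilate b φ) - ∑ j ∈ range (k+1-s),
          (b:ℂ)^(lam+1) * (Real.log b : ℂ)^j * ((Nat.choose (s+j) s : ℂ) * c (s+j) φ) with hz
      have main : ∀ a : ℝ, 0 < a →
          ∑ s ∈ range (k+1), (a:ℂ)^(lam+1) * (Real.log a : ℂ)^s * z s = 0 := by
        intro a ha
        have e1 : ∑ s ∈ range (k+1), (a:ℂ)^(lam+1) * (Real.log a : ℂ)^s * (c s (dilate b φ))
            = ∑ m ∈ range (k+1), ((a*b : ℝ):ℂ)^(lam+1) * (Real.log (a*b) : ℂ)^m * c m φ := by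
          rw [← hid a ha (dilate b φ), dilate_comp a b (ne_of_gt ha) (ne_of_gt hb),
            hid (a*b) (mul_pos ha hb) φ]
        have e2 : ∑ m ∈ range (k+1), ((a*b : ℝ):ℂ)^(lam+1) * (Real.log (a*b) : ℂ)^m * c m φ
            = ∑ s ∈ range (k+1), ∑ j ∈ range (k+1-s),
                (a:ℂ)^(lam+1) * (Real.log a : ℂ)^s *
                  ((b:ℂ)^(lam+1) * (Real.log b : ℂ)^j * ((Nat.choose (s+j) s : ℂ) * c (s+j) φ)) := by
          have hab : ((a*b : ℝ):ℂ)^(lam+1) = (a:ℂ)^(lam+1) * (b:ℂ)^(lam+1) := by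
            rw [Complex.ofReal_mul]
            exact mul_cpow_ofReal_nonneg ha.le hb.le _
          have hlog : ((Real.log (a*b) : ℝ):ℂ) = (Real.log a : ℂ) + (Real.log b : ℂ) := by
            rw [Real.log_mul (ne_of_gt ha) (ne_of_gt hb)]
            push_cast
            ring
          rw [← tri (k+1) (fun s j => (a:ℂ)^(lam+1) * (Real.log a : ℂ)^s *
                ((b:ℂ)^(lam+1) * (Real.log b : ℂ)^j * ((Nat.choose (s+j) s : ℂ) * c (s+j) φ)))]
          apply Finset.sum_congr rfl
          intro m hm
          rw [hab, hlog, add_pow, Finset.mul_sum, Finset.sum_mul]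
          apply Finset.sum_congr rfl
          intro s hs
          rw [Finset.mem_range] at hs
          have hsm : s + (m - s) = m := by omega
          rw [hsm]
          ring
        calc ∑ s ∈ range (k+1), (a:ℂ)^(lam+1) * (Real.log a : ℂ)^s * z s
            = (∑ s ∈ range (k+1), (a:ℂ)^(lam+1) * (Real.log a : ℂ)^s * (c s (dilate b φ)))
              - ∑ s ∈ range (k+1), ∑ j ∈ range (k+1-s),
                (a:ℂ)^(lam+1) * (Real.log a : ℂ)^s *
                  ((b:ℂ)^(lam+1) * (Real.log b : ℂ)^j * ((Nat.choose (s+j) s : ℂ) * c (s+j) φ)) := by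
              rw [← Finset.sum_sub_distrib]
              apply Finset.sum_congr rfl
              intro s _
              rw [hz]
              beta_reduce
              rw [mul_sub, Finset.mul_sum]
          _ = 0 := by rw [e1, e2, sub_self]
      have hz0 : ∀ s < k+1, z s = 0 := by
        apply poly_indep
        intro t
        have h1 := main (Real.exp t) (Real.exp_pos t)
        rw [Real.log_exp] at h1
        have h2 : ∑ s ∈ range (k+1), ((Real.exp t : ℝ):ℂ)^(lam+1) * (t:ℂ)^s * z s
            = ((Real.exp t : ℝ):ℂ)^(lam+1) * ∑ s ∈ range (k+1), z s * (t:ℂ)^s := by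
          rw [Finset.mul_sum]
          apply Finset.sum_congr rfl
          intro s _
          ring
        rw [h2] at h1
        rcases mul_eq_zero.mp h1 with h | h
        · exfalso
          rw [expCpow] at h
          exact Complex.exp_ne_zero _ h
        · exact h
      have hzs := hz0 s (by omega)
      rw [hz] at hzs
      beta_reduce at hzs
      exact sub_eq_zero.mp hzs
    apply IsQAHD.step hk (fun m => c (k-m))
    · intro j hj
      have heq : k + 1 - (k - j) = j + 1 := by omega
      apply ih j hj (c (k-j)) (fun i => ((Nat.choose ((k-j)+i) (k-j) : ℕ) : ℂ) • c ((k-j)+i))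
      · simp
      · intro a ha φ
        rw [hder (k-j) (by omega) a ha φ, heq]
        apply Finset.sum_congr rfl
        intro m _
        rw [ContinuousLinearMap.smul_apply, smul_eq_mul]
    · intro a ha φ
      rw [hid a ha φ, range_succ_split k (fun m => (a:ℂ)^(lam+1) * (Real.log a : ℂ)^m * c m φ)]
      congr 1
      · simp [hc0]
      · apply Finset.sum_congr rfl
        intro r hr
        rw [Finset.mem_Icc] at hr
        rw [Nat.sub_sub_self hr.2]

/-- every de6-QAHD (with arbitrary differentiable coefficient functions)
of degree `λ` and order `k` is a QAHD of degree `λ` and order `k` (with the specific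
coefficients `a^(λ+1) (log a)^r`). -/
theorem stmt_13 (lam : ℂ) (k : ℕ) (f : 𝓢(ℝ, ℂ) →L[ℂ] ℂ)
    (hf : IsDe6QAHD lam k f) : IsQAHD lam k f := by
  induction hf with
  | base h => exact IsQAHD.base h
  | @step k hk f g H hg hH hid ih =>
    -- expansions for the lower-order witnesses
    have hDex : ∀ j, j < k → ∃ d : ℕ → (𝓢(ℝ, ℂ) →L[ℂ] ℂ), d 0 = g j ∧
        ∀ b : ℝ, 0 < b → ∀ φ : 𝓢(ℝ, ℂ),
          (g j) (dilate b φ) = ∑ s ∈ range (j+1), (b:ℂ)^(lam+1) * (Real.log b : ℂ)^s * d s φ :=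
      fun j hj => qahd_expand (ih j hj)
    choose Dd hD0 hDid using hDex
    set DD : ℕ → ℕ → (𝓢(ℝ, ℂ) →L[ℂ] ℂ) :=
      fun j s => if h : j < k then Dd j h s else 0 with hDD
    have hDDid : ∀ j (h : j < k), ∀ b : ℝ, 0 < b → ∀ φ : 𝓢(ℝ, ℂ),
        (g j) (dilate b φ) = ∑ s ∈ range (j+1), (b:ℂ)^(lam+1) * (Real.log b : ℂ)^s * DD j s φ := by
      intro j h b hb φ
      rw [hDid j h b hb φ]
      apply Finset.sum_congr rfl
      intro s _
      rw [hDD]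
      simp [dif_pos h]
    -- the coefficient functions and their derivatives
    set hfun : ℕ → ℝ → ℂ := fun r t => Complex.exp (-((lam+1) * (t:ℂ))) * H r (Real.exp t)
      with hhfun
    set del : ℕ → ℂ := fun r => deriv (hfun r) 0 with hdel
    have hderiv : ∀ r, 1 ≤ r → r ≤ k → HasDerivAt (hfun r) (del r) 0 := by
      intro r hr1 hrk
      have d0 : DifferentiableAt ℝ (fun t : ℝ => ((t : ℝ) : ℂ)) 0 :=
        Complex.ofRealCLM.differentiableAt
      have d1 : DifferentiableAt ℝ (fun t : ℝ => Complex.exp (-((lam+1) * (t:ℂ)))) 0 :=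
        ((d0.const_mul (lam+1)).neg).cexp
      have d2 : DifferentiableAt ℝ (fun t : ℝ => H r (Real.exp t)) 0 := by
        have h1 : DifferentiableAt ℝ (H r) (Real.exp 0) := by
          rw [Real.exp_zero]
          exact hH r hr1 hrk 1 one_pos
        exact h1.comp 0 Real.differentiable_exp.differentiableAt
      exact (d1.mul d2).hasDerivAt
    -- the coefficient distributions
    set C : ℕ → (𝓢(ℝ, ℂ) →L[ℂ] ℂ) := fun m => if m = 0 then f else
      ∑ r ∈ Icc 1 (k+1-m), ((del r)/(m:ℂ)) • DD (k-r) (m-1) with hC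
    apply lemA lam k f C (by simp [hC])
    intro a ha φ
    -- per test function analysis
    set G : ℝ → ℂ := fun t => Complex.exp (-((lam+1) * (t:ℂ))) * f (dilate (Real.exp t) φ)
      with hG
    set P : ℕ → ℝ → ℂ := fun r u => ∑ s ∈ range (k-r+1), (u:ℂ)^s * DD (k-r) s φ with hP
    have E1 : ∀ t u : ℝ, G (t+u) = G u + ∑ r ∈ Icc 1 k, hfun r t * P r u := by
      intro t u
      have hb : (0:ℝ) < Real.exp u := Real.exp_pos u
      have hab : Real.exp (t+u) = Real.exp t * Real.exp u := Real.exp_add t u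
      have h1 : f (dilate (Real.exp (t+u)) φ)
          = Complex.exp ((lam+1) * (t:ℂ)) * f (dilate (Real.exp u) φ)
            + ∑ r ∈ Icc 1 k, H r (Real.exp t) *
                (Complex.exp ((lam+1) * (u:ℂ)) * P r u) := by
        rw [hab, ← dilate_comp _ _ (ne_of_gt (Real.exp_pos t)) (ne_of_gt hb),
          hid (Real.exp t) (Real.exp_pos t), expCpow]
        congr 1
        apply Finset.sum_congr rfl
        intro r hr
        rw [Finset.mem_Icc] at hr
        rw [hDDid (k-r) (by omega) (Real.exp u) hb φ]
        congr 1
        rw [hP]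
        have : k - r + 1 = k - r + 1 := rfl
        rw [Finset.mul_sum]
        apply Finset.sum_congr rfl
        intro s _
        rw [expCpow, Real.log_exp]
        ring
      rw [hG]
      beta_reduce
      rw [h1, mul_add, Finset.mul_sum]
      congr 1
      · rw [← mul_assoc, ← Complex.exp_add]
        congr 2
        push_cast
        ring
      · apply Finset.sum_congr rfl
        intro r hr
        rw [hhfun]
        beta_reduce
        have : Complex.exp (-((lam+1) * ((t+u:ℝ):ℂ))) * (H r (Real.exp t) *
            (Complex.exp ((lam+1) * (u:ℂ)) * P r u))
            = (Complex.exp (-((lam+1) * ((t+u:ℝ):ℂ))) * Complex.exp ((lam+1) * (u:ℂ)))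
              * (H r (Real.exp t) * P r u) := by ring
        rw [this, ← Complex.exp_add]
        have h2 : -((lam+1) * ((t+u:ℝ):ℂ)) + (lam+1) * (u:ℂ) = -((lam+1) * (t:ℂ)) := by
          push_cast
          ring
        rw [h2]
        ring
    set Dval : ℝ → ℂ := fun u => ∑ r ∈ Icc 1 k, del r * P r u with hDval
    have E2 : ∀ u : ℝ, HasDerivAt G (Dval u) u := by
      intro u
      have hshift : HasDerivAt (fun t => G (t+u)) (Dval u) 0 := by
        have heq : (fun t : ℝ => G (t+u)) = fun t => G u + ∑ r ∈ Icc 1 k, hfun r t * P r u :=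
          funext (fun t => E1 t u)
        rw [heq, hDval]
        exact HasDerivAt.const_add _
          (HasDerivAt.fun_sum (fun r hr => by
            rw [Finset.mem_Icc] at hr
            exact (hderiv r hr.1 hr.2).mul_const (P r u)))
      have hshift' : HasDerivAt (fun t => G (t+u)) (Dval u) (u + -u) := by
        rw [add_neg_cancel]; exact hshift
      have h3 := HasDerivAt.comp_add_const u (-u) hshift'
      have h4 : (fun x : ℝ => G ((x + -u) + u)) = G := by
        funext x
        rw [show x + -u + u = x by ring]
      rw [h4] at h3
      exact h3
    set A : ℝ → ℂ := fun u => ∑ r ∈ Icc 1 k,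
        del r * ∑ s ∈ range (k-r+1), (u:ℂ)^(s+1)/((s:ℂ)+1) * DD (k-r) s φ with hA
    have E3 : ∀ u : ℝ, HasDerivAt A (Dval u) u := by
      intro u
      have goal2 : HasDerivAt (fun u : ℝ => ∑ r ∈ Icc 1 k,
          del r * ∑ s ∈ range (k-r+1), (u:ℂ)^(s+1)/((s:ℂ)+1) * DD (k-r) s φ)
          (∑ r ∈ Icc 1 k, del r * ∑ s ∈ range (k-r+1), (u:ℂ)^s * DD (k-r) s φ) u := by
        apply HasDerivAt.fun_sum
        intro r _
        apply HasDerivAt.const_mul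
        apply HasDerivAt.fun_sum
        intro s _
        have h1 : HasDerivAt (fun u : ℝ => ((u:ℝ):ℂ)^(s+1))
            ((((s:ℂ)+1)) * (u:ℂ)^s) u := by
          have h := (hasDerivAt_pow (s+1) ((u:ℝ):ℂ)).comp_ofReal
          simpa [Nat.add_sub_cancel] using h
        have h2 := (h1.div_const ((s:ℂ)+1)).mul_const (DD (k-r) s φ)
        have h3 : ((s:ℂ)+1) * (u:ℂ)^s / ((s:ℂ)+1) = (u:ℂ)^s := by
          rw [mul_comm, mul_div_assoc, div_self (Nat.cast_add_one_ne_zero s), mul_one]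
        rw [h3] at h2
        exact h2
      exact goal2
    have E4 : ∀ t : ℝ, G t = f φ + A t := by
      have hdiff : Differentiable ℝ (fun w => G w - A w) :=
        fun x => ((E2 x).sub (E3 x)).differentiableAt
      have hzero : ∀ x : ℝ, deriv (fun w => G w - A w) x = 0 := by
        intro x
        have := ((E2 x).sub (E3 x))
        rw [sub_self] at this
        exact this.deriv
      intro t
      have hconst := is_const_of_deriv_eq_zero hdiff hzero t 0
      have hG0 : G 0 = f φ := by
        rw [hG]
        beta_reduce
        rw [Real.exp_zero, dilate_one]
        push_cast
        simp
      have hA0 : A 0 = 0 := by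
        rw [hA]
        beta_reduce
        push_cast
        simp
      have : G t - A t = G 0 - A 0 := hconst
      rw [hG0, hA0, sub_zero] at this
      exact eq_add_of_sub_eq this
    -- conclude
    set t : ℝ := Real.log a with ht
    have hexp : Real.exp t = a := Real.exp_log ha
    have hfd : f (dilate a φ) = Complex.exp ((lam+1) * (t:ℂ)) * G t := by
      rw [hG]
      beta_reduce
      rw [hexp, ← mul_assoc, ← Complex.exp_add]
      rw [show (lam+1) * (t:ℂ) + -((lam+1)*(t:ℂ)) = 0 by ring, Complex.exp_zero, one_mul]
    have hcp : Complex.exp ((lam+1) * (t:ℂ)) = (a:ℂ)^(lam+1) := (cpow_pos_eq ha _).symm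
    have key : A t = ∑ m ∈ Icc 1 k, (t:ℂ)^m * C m φ := by
      rw [hA]
      beta_reduce
      have inner : ∀ r ∈ Icc 1 k,
          del r * ∑ s ∈ range (k-r+1), (t:ℂ)^(s+1)/((s:ℂ)+1) * DD (k-r) s φ
          = ∑ m ∈ Icc 1 (k+1-r), del r * ((t:ℂ)^m/((m:ℂ)) * DD (k-r) (m-1) φ) := by
        intro r hr
        rw [Finset.mem_Icc] at hr
        rw [sum_Icc_one_eq_sum_range (k+1-r)
          (fun m => del r * ((t:ℂ)^m/((m:ℂ)) * DD (k-r) (m-1) φ)),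
          show k+1-r = k-r+1 by omega, Finset.mul_sum]
        apply Finset.sum_congr rfl
        intro s _
        simp only [Nat.add_sub_cancel]
        push_cast
        ring
      rw [Finset.sum_congr rfl inner,
        swap_Icc k (fun r m => del r * ((t:ℂ)^m/((m:ℂ)) * DD (k-r) (m-1) φ))]
      apply Finset.sum_congr rfl
      intro m hm
      rw [Finset.mem_Icc] at hm
      have hCm : C m = ∑ r ∈ Icc 1 (k+1-m), ((del r)/(m:ℂ)) • DD (k-r) (m-1) := by
        rw [hC]
        beta_reduce
        rw [if_neg (by omega)]
      rw [hCm, ContinuousLinearMap.sum_apply, Finset.mul_sum]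
      apply Finset.sum_congr rfl
      intro r _
      rw [ContinuousLinearMap.smul_apply, smul_eq_mul]
      ring
    rw [hfd, E4 t, hcp, key, range_succ_split k
      (fun m => (a:ℂ)^(lam+1) * (t:ℂ)^m * C m φ), mul_add, Finset.mul_sum]
    congr 1
    · have hC0 : C 0 = f := by simp [hC]
      rw [hC0]
      simp
    · apply Finset.sum_congr rfl
      intro m _
      ring

end
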